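/- Suppose ν₁, ν₂ and D₁, D₂ are twice continuously differentiable on open convex sets containing the respective simplexes, and that for each i ∈ {1, 2} and every point (p, π) with p, π in (a neighborhood of) the relevant simplexes: (a) the full Hessian of D_{−i} with respect to the joint variable (p, π) is positive semidefinite; (b) ⟨w, (ε_i∇²ν_i(π) − ½∇²_{ππ}D_{−i}(p, π))w⟩ ≥ α‖w‖₂² for all w, where ∇²_{ππ}D_{−i} is the Hessian of D_{−i} in its second argument; and (c) ⟨w, ½∇²_{pp}D_{−i}(p, π)w⟩ ≥ α‖w‖₂² for all w, where ∇²_{pp}D_{−i} is the Hessian of D_{−i} in its first argument. Then for every payoff pair R, the gradient operator F(·; R) of the modified 4-player game is α-strongly monotone on Z. -/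

import Mathlib

noncomputable section

/-- `ℝⁿ` with the Euclidean norm. -/
abbrev Vec (n : ℕ) := EuclideanSpace ℝ (Fin n)

/-- The standard simplex `Δₙ = {x : xⱼ ≥ 0, ∑ⱼ xⱼ = 1}`. -/
def Δ (n : ℕ) : Set (Vec n) := {x | (∀ j, 0 ≤ x j) ∧ ∑ j, x j = 1}

/-- Matrix–vector product `M x`. -/
def mv {m n : ℕ} (M : Matrix (Fin m) (Fin n) ℝ) (x : Vec n) : Vec m :=
  WithLp.toLp 2 (fun k => ∑ j, M k j * x j)

/-- Joint strategy space of the modified 4-player game: `z = (π₁, π₂, p₁, p₂)`. -/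
abbrev Joint (a₁ a₂ : ℕ) := Vec a₁ × Vec a₂ × Vec a₂ × Vec a₁

/-- Membership in `Z = Δ_{a₁} × Δ_{a₂} × Δ_{a₂} × Δ_{a₁}`. -/
def inZ {a₁ a₂ : ℕ} (z : Joint a₁ a₂) : Prop :=
  z.1 ∈ Δ a₁ ∧ z.2.1 ∈ Δ a₂ ∧ z.2.2.1 ∈ Δ a₂ ∧ z.2.2.2 ∈ Δ a₁

/-- The standard inner product on the joint space. -/
def jip {a₁ a₂ : ℕ} (z w : Joint a₁ a₂) : ℝ :=
  (inner ℝ z.1 w.1 : ℝ) + (inner ℝ z.2.1 w.2.1 : ℝ)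
    + (inner ℝ z.2.2.1 w.2.2.1 : ℝ) + (inner ℝ z.2.2.2 w.2.2.2 : ℝ)

/-- The squared Euclidean norm on the joint space. -/
def jnormSq {a₁ a₂ : ℕ} (z : Joint a₁ a₂) : ℝ :=
  ‖z.1‖ ^ 2 + ‖z.2.1‖ ^ 2 + ‖z.2.2.1‖ ^ 2 + ‖z.2.2.2‖ ^ 2

/-- Objective `J₁(z; R) = −π₁ᵀ R₁ p₁ − D₁(p₁, π₂) + ε₁ ν₁(π₁)` of player 1. -/
def J1 {a₁ a₂ : ℕ} (ε₁ : ℝ) (ν₁ : Vec a₁ → ℝ) (D₁ : Vec a₂ → Vec a₂ → ℝ)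
    (R₁ : Matrix (Fin a₁) (Fin a₂) ℝ) (z : Joint a₁ a₂) : ℝ :=
  -(inner ℝ z.1 (mv R₁ z.2.2.1) : ℝ) - D₁ z.2.2.1 z.2.1 + ε₁ * ν₁ z.1

/-- Objective `J₂(z; R) = −π₂ᵀ R₂ p₂ − D₂(p₂, π₁) + ε₂ ν₂(π₂)` of player 2. -/
def J2 {a₁ a₂ : ℕ} (ε₂ : ℝ) (ν₂ : Vec a₂ → ℝ) (D₂ : Vec a₁ → Vec a₁ → ℝ)
    (R₂ : Matrix (Fin a₂) (Fin a₁) ℝ) (z : Joint a₁ a₂) : ℝ :=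
  -(inner ℝ z.2.1 (mv R₂ z.2.2.2) : ℝ) - D₂ z.2.2.2 z.1 + ε₂ * ν₂ z.2.1

/-- Nash equilibrium of the modified 4-player game: each of the four components minimizes
its owner's objective over its simplex, the others fixed (`J̄ᵢ = −Jᵢ` for the adversaries). -/
def IsNash {a₁ a₂ : ℕ} (ε₁ ε₂ : ℝ) (ν₁ : Vec a₁ → ℝ) (ν₂ : Vec a₂ → ℝ)
    (D₁ : Vec a₂ → Vec a₂ → ℝ) (D₂ : Vec a₁ → Vec a₁ → ℝ)
    (R₁ : Matrix (Fin a₁) (Fin a₂) ℝ) (R₂ : Matrix (Fin a₂) (Fin a₁) ℝ)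
    (z : Joint a₁ a₂) : Prop :=
  inZ z
    ∧ (∀ q ∈ Δ a₁, J1 ε₁ ν₁ D₁ R₁ z ≤ J1 ε₁ ν₁ D₁ R₁ (q, z.2.1, z.2.2.1, z.2.2.2))
    ∧ (∀ q ∈ Δ a₂, J2 ε₂ ν₂ D₂ R₂ z ≤ J2 ε₂ ν₂ D₂ R₂ (z.1, q, z.2.2.1, z.2.2.2))
    ∧ (∀ q ∈ Δ a₂, -J1 ε₁ ν₁ D₁ R₁ z ≤ -J1 ε₁ ν₁ D₁ R₁ (z.1, z.2.1, q, z.2.2.2))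
    ∧ (∀ q ∈ Δ a₁, -J2 ε₂ ν₂ D₂ R₂ z ≤ -J2 ε₂ ν₂ D₂ R₂ (z.1, z.2.1, z.2.2.1, q))

/-- The gradient operator `F(z; R)` of the modified 4-player game. -/
def Fop {a₁ a₂ : ℕ} (ε₁ ε₂ : ℝ) (ν₁ : Vec a₁ → ℝ) (ν₂ : Vec a₂ → ℝ)
    (D₁ : Vec a₂ → Vec a₂ → ℝ) (D₂ : Vec a₁ → Vec a₁ → ℝ)
    (R₁ : Matrix (Fin a₁) (Fin a₂) ℝ) (R₂ : Matrix (Fin a₂) (Fin a₁) ℝ)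
    (z : Joint a₁ a₂) : Joint a₁ a₂ :=
  (-(mv R₁ z.2.2.1) + ε₁ • gradient ν₁ z.1,
   -(mv R₂ z.2.2.2) + ε₂ • gradient ν₂ z.2.1,
   mv R₁.transpose z.1 + gradient (fun p => D₁ p z.2.1) z.2.2.1,
   mv R₂.transpose z.2.1 + gradient (fun p => D₂ p z.1) z.2.2.2)

/-- `α`-strong monotonicity of the gradient operator on `Z`. -/
def StronglyMonotoneOnZ {a₁ a₂ : ℕ} (α ε₁ ε₂ : ℝ) (ν₁ : Vec a₁ → ℝ) (ν₂ : Vec a₂ → ℝ)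
    (D₁ : Vec a₂ → Vec a₂ → ℝ) (D₂ : Vec a₁ → Vec a₁ → ℝ)
    (R₁ : Matrix (Fin a₁) (Fin a₂) ℝ) (R₂ : Matrix (Fin a₂) (Fin a₁) ℝ) : Prop :=
  ∀ z z' : Joint a₁ a₂, inZ z → inZ z' →
    α * jnormSq (z - z')
      ≤ jip (z - z') (Fop ε₁ ε₂ ν₁ ν₂ D₁ D₂ R₁ R₂ z - Fop ε₁ ε₂ ν₁ ν₂ D₁ D₂ R₁ R₂ z')

/-- Strict monotonicity of the gradient operator on `Z`. -/
def StrictlyMonotoneOnZ {a₁ a₂ : ℕ} (ε₁ ε₂ : ℝ) (ν₁ : Vec a₁ → ℝ) (ν₂ : Vec a₂ → ℝ)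
    (D₁ : Vec a₂ → Vec a₂ → ℝ) (D₂ : Vec a₁ → Vec a₁ → ℝ)
    (R₁ : Matrix (Fin a₁) (Fin a₂) ℝ) (R₂ : Matrix (Fin a₂) (Fin a₁) ℝ) : Prop :=
  ∀ z z' : Joint a₁ a₂, inZ z → inZ z' → z ≠ z' →
    0 < jip (z - z') (Fop ε₁ ε₂ ν₁ ν₂ D₁ D₂ R₁ R₂ z - Fop ε₁ ε₂ ν₁ ν₂ D₁ D₂ R₁ R₂ z')

/-- Entrywise `L∞` distance between payoff pairs. -/
def Rdist {a₁ a₂ : ℕ} (R₁ R₁' : Matrix (Fin a₁) (Fin a₂) ℝ)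
    (R₂ R₂' : Matrix (Fin a₂) (Fin a₁) ℝ) : ℝ :=
  max (⨆ kj : Fin a₁ × Fin a₂, |R₁ kj.1 kj.2 - R₁' kj.1 kj.2|)
      (⨆ kj : Fin a₂ × Fin a₁, |R₂ kj.1 kj.2 - R₂' kj.1 kj.2|)

section Helpers

open InnerProductSpace

variable {E F : Type*} [NormedAddCommGroup E] [NormedSpace ℝ E]
  [NormedAddCommGroup F] [NormedSpace ℝ F]

/-- differentiability of `y ↦ fderiv f y v`. -/
lemma diffAt_fderiv_apply {f : E → ℝ} {x : E} (hf : ContDiffAt ℝ 2 f x) (v : E) :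
    DifferentiableAt ℝ (fun y => fderiv ℝ f y v) x :=
  (ContinuousLinearMap.apply ℝ ℝ v).differentiableAt.comp x
    ((hf.fderiv_right (le_refl 2)).differentiableAt one_ne_zero)

/-- iterated directional derivative as second-derivative bilinear form. -/
lemma snd_deriv_eq {f : E → ℝ} {x : E} (hf : ContDiffAt ℝ 2 f x) (u v : E) :
    fderiv ℝ (fun y => fderiv ℝ f y v) x u = fderiv ℝ (fderiv ℝ f) x u v := by
  have hd : DifferentiableAt ℝ (fderiv ℝ f) x :=
    (hf.fderiv_right (le_refl 2)).differentiableAt one_ne_zero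
  rw [fderiv_clm_apply hd (differentiableAt_const v)]
  simp

/-- slice first derivative (first variable). -/
lemma fst_slice_fderiv {f : E × F → ℝ} {p : E} {π : F}
    (hf : DifferentiableAt ℝ f (p, π)) (w : E) :
    fderiv ℝ (fun q => f (q, π)) p w = fderiv ℝ f (p, π) (w, 0) := by
  have hg : HasFDerivAt (fun q : E => (q, π)) (ContinuousLinearMap.inl ℝ E F) p := by
    exact HasFDerivAt.prodMk (hasFDerivAt_id p) (hasFDerivAt_const π p)
  have := (hf.hasFDerivAt.comp p hg).fderiv
  rw [show (fun q => f (q, π)) = f ∘ (fun q : E => (q, π)) from rfl, this]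
  rfl

/-- slice first derivative (second variable). -/
lemma snd_slice_fderiv {f : E × F → ℝ} {p : E} {π : F}
    (hf : DifferentiableAt ℝ f (p, π)) (w : F) :
    fderiv ℝ (fun q => f (p, q)) π w = fderiv ℝ f (p, π) (0, w) := by
  have hg : HasFDerivAt (fun q : F => (p, q)) (ContinuousLinearMap.inr ℝ E F) π :=
    HasFDerivAt.prodMk (hasFDerivAt_const p π) (hasFDerivAt_id π)
  have := (hf.hasFDerivAt.comp π hg).fderiv
  rw [show (fun q => f (p, q)) = f ∘ (fun q : F => (p, q)) from rfl, this]
  rfl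

/-- slice second derivative (first variable) equals joint Hessian block. -/
lemma fst_slice_snd_deriv {f : E × F → ℝ} {S : Set (E × F)} (hS : IsOpen S)
    (hf : ContDiffOn ℝ 2 f S) {p : E} {π : F} (hx : (p, π) ∈ S) (w w' : E) :
    fderiv ℝ (fun y => fderiv ℝ (fun q => f (q, π)) y w) p w'
      = fderiv ℝ (fderiv ℝ f) (p, π) (w', 0) (w, 0) := by
  have hcont : Continuous (fun q : E => (q, π)) := (continuous_id.prodMk continuous_const)
  have hopen : IsOpen {q : E | (q, π) ∈ S} := hS.preimage hcont
  have hfx : ContDiffAt ℝ 2 f (p, π) := hf.contDiffAt (hS.mem_nhds hx)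
  have hev : (fun y => fderiv ℝ (fun q => f (q, π)) y w)
      =ᶠ[nhds p] (fun y => fderiv ℝ f (y, π) (w, 0)) := by
    filter_upwards [hopen.mem_nhds hx] with q hq
    exact fst_slice_fderiv ((hf.contDiffAt (hS.mem_nhds hq)).differentiableAt two_ne_zero) w
  rw [hev.fderiv_eq]
  have hdiff : DifferentiableAt ℝ (fun x => fderiv ℝ f x (w, 0)) (p, π) :=
    diffAt_fderiv_apply hfx (w, 0)
  have hg : HasFDerivAt (fun q : E => (q, π)) (ContinuousLinearMap.inl ℝ E F) p :=
    HasFDerivAt.prodMk (hasFDerivAt_id p) (hasFDerivAt_const π p)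
  have hcomp := (hdiff.hasFDerivAt.comp p hg).fderiv
  rw [show (fun y : E => fderiv ℝ f (y, π) (w, 0))
      = (fun x => fderiv ℝ f x (w, 0)) ∘ (fun q : E => (q, π)) from rfl, hcomp]
  show fderiv ℝ (fun x => fderiv ℝ f x (w, 0)) (p, π) (w', 0) = _
  rw [snd_deriv_eq hfx]

/-- slice second derivative (second variable) equals joint Hessian block. -/
lemma snd_slice_snd_deriv {f : E × F → ℝ} {S : Set (E × F)} (hS : IsOpen S)
    (hf : ContDiffOn ℝ 2 f S) {p : E} {π : F} (hx : (p, π) ∈ S) (w w' : F) :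
    fderiv ℝ (fun y => fderiv ℝ (fun q => f (p, q)) y w) π w'
      = fderiv ℝ (fderiv ℝ f) (p, π) (0, w') (0, w) := by
  have hcont : Continuous (fun q : F => (p, q)) := (continuous_const.prodMk continuous_id)
  have hopen : IsOpen {q : F | (p, q) ∈ S} := hS.preimage hcont
  have hfx : ContDiffAt ℝ 2 f (p, π) := hf.contDiffAt (hS.mem_nhds hx)
  have hev : (fun y => fderiv ℝ (fun q => f (p, q)) y w)
      =ᶠ[nhds π] (fun y => fderiv ℝ f (p, y) (0, w)) := by
    filter_upwards [hopen.mem_nhds hx] with q hq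
    exact snd_slice_fderiv ((hf.contDiffAt (hS.mem_nhds hq)).differentiableAt two_ne_zero) w
  rw [hev.fderiv_eq]
  have hdiff : DifferentiableAt ℝ (fun x => fderiv ℝ f x (0, w)) (p, π) :=
    diffAt_fderiv_apply hfx (0, w)
  have hg : HasFDerivAt (fun q : F => (p, q)) (ContinuousLinearMap.inr ℝ E F) π :=
    HasFDerivAt.prodMk (hasFDerivAt_const p π) (hasFDerivAt_id π)
  have hcomp := (hdiff.hasFDerivAt.comp π hg).fderiv
  rw [show (fun y : F => fderiv ℝ f (p, y) (0, w))
      = (fun x => fderiv ℝ f x (0, w)) ∘ (fun q : F => (p, q)) from rfl, hcomp]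
  show fderiv ℝ (fun x => fderiv ℝ f x (0, w)) (p, π) (0, w') = _
  rw [snd_deriv_eq hfx]

/-- derivative along a line of a directional derivative. -/
lemma hasDerivAt_line_fderiv {f : E → ℝ} (a u v : E) (t : ℝ)
    (hf : ContDiffAt ℝ 2 f (a + t • u)) :
    HasDerivAt (fun s : ℝ => fderiv ℝ f (a + s • u) v)
      (fderiv ℝ (fderiv ℝ f) (a + t • u) u v) t := by
  have hc : HasDerivAt (fun s : ℝ => a + s • u) u t := by
    simpa using ((hasDerivAt_id t).smul_const u).const_add a
  have hd := diffAt_fderiv_apply hf v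
  have := hd.hasFDerivAt.comp_hasDerivAt t hc
  rw [snd_deriv_eq hf] at this
  exact this

/-- mean value inequality. -/
lemma mvt_ge {g g' : ℝ → ℝ} (h : ∀ t ∈ Set.Icc (0:ℝ) 1, HasDerivAt g (g' t) t)
    {C : ℝ} (hC : ∀ t ∈ Set.Icc (0:ℝ) 1, C ≤ g' t) : C ≤ g 1 - g 0 := by
  have hcont : ContinuousOn g (Set.Icc 0 1) := fun t ht =>
    (h t ht).continuousAt.continuousWithinAt
  have hdiff : DifferentiableOn ℝ g (interior (Set.Icc (0:ℝ) 1)) := fun t ht =>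
    ((h t (interior_subset ht)).differentiableAt).differentiableWithinAt
  have := (convex_Icc (0:ℝ) 1).mul_sub_le_image_sub_of_le_deriv hcont hdiff
    (fun t ht => by rw [(h t (interior_subset ht)).deriv]; exact hC t (interior_subset ht))
    0 (by norm_num) 1 (by norm_num) (by norm_num)
  simpa using this

/-- cross-term bound from PSD joint Hessian + symmetry. -/
lemma cross_bound {f : E × F → ℝ} {x : E × F} (hf : ContDiffAt ℝ 2 f x)
    (hpsd : ∀ w : E × F, 0 ≤ fderiv ℝ (fderiv ℝ f) x w w) (u : E) (w : F) :
    -(1/2) * fderiv ℝ (fderiv ℝ f) x (u, 0) (u, 0)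
      - (1/2) * fderiv ℝ (fderiv ℝ f) x (0, w) (0, w)
      ≤ fderiv ℝ (fderiv ℝ f) x (0, w) (u, 0) := by
  have hsymm := hf.isSymmSndFDerivAt (by simp)
  have h0 := hpsd (u, w)
  have hdecomp : ((u, w) : E × F) = (u, 0) + ((0 : E), w) := by
    simp [Prod.ext_iff]
  rw [hdecomp] at h0
  simp only [map_add, ContinuousLinearMap.add_apply] at h0
  have hs : fderiv ℝ (fderiv ℝ f) x (u, 0) ((0 : E), w)
      = fderiv ℝ (fderiv ℝ f) x ((0 : E), w) (u, 0) := hsymm _ _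
  nlinarith [h0, hs]

/-- gradient pairing. -/
lemma inner_grad' {n : ℕ} (f : EuclideanSpace ℝ (Fin n) → ℝ) (x v : EuclideanSpace ℝ (Fin n)) :
    (inner ℝ v (gradient f x) : ℝ) = fderiv ℝ f x v := by
  rw [real_inner_comm]; exact toDual_symm_apply

end Helpers

lemma mv_sub' {m n : ℕ} (M : Matrix (Fin m) (Fin n) ℝ) (x y : Vec n) :
    mv M x - mv M y = mv M (x - y) := by
  ext k
  simp [mv, ← Finset.sum_sub_distrib, mul_sub]

lemma inner_mv_transpose {m n : ℕ} (M : Matrix (Fin m) (Fin n) ℝ) (x : Vec m) (y : Vec n) :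
    (inner ℝ x (mv M y) : ℝ) = (inner ℝ y (mv M.transpose x) : ℝ) := by
  simp only [PiLp.inner_apply, RCLike.inner_apply, conj_trivial, mv, Matrix.transpose_apply,
    Finset.mul_sum, Finset.sum_mul]
  rw [Finset.sum_comm]
  apply Finset.sum_congr rfl; intros; apply Finset.sum_congr rfl; intros; ring

set_option maxHeartbeats 2000000 in
/-- If `ν₁, ν₂, D₁, D₂` are `C²` on open convex neighborhoods of the
simplexes, the joint Hessian of each `D_{−i}` is positive semidefinite, and
`εᵢ∇²νᵢ − ½∇²_{ππ}D_{−i} ⪰ αI` and `½∇²_{pp}D_{−i} ⪰ αI` pointwise, then for every payoff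
pair the gradient operator of the modified 4-player game is `α`-strongly monotone on `Z`.
(Hessian quadratic forms are expressed as iterated directional derivatives.) -/
theorem hessian_conditions_imply_strong_monotonicity
    {a₁ a₂ : ℕ} (ha₁ : 1 ≤ a₁) (ha₂ : 1 ≤ a₂)
    (ε₁ ε₂ : ℝ) (hε₁ : 0 < ε₁) (hε₂ : 0 < ε₂) (α : ℝ) (hα : 0 < α)
    (ν₁ : Vec a₁ → ℝ) (ν₂ : Vec a₂ → ℝ)
    (D₁ : Vec a₂ → Vec a₂ → ℝ) (D₂ : Vec a₁ → Vec a₁ → ℝ)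
    (U₁ : Set (Vec a₁)) (U₂ : Set (Vec a₂))
    (hU₁open : IsOpen U₁) (hU₁conv : Convex ℝ U₁) (hU₁sub : Δ a₁ ⊆ U₁)
    (hU₂open : IsOpen U₂) (hU₂conv : Convex ℝ U₂) (hU₂sub : Δ a₂ ⊆ U₂)
    (hν₁ : ContDiffOn ℝ 2 ν₁ U₁) (hν₂ : ContDiffOn ℝ 2 ν₂ U₂)
    (hD₁ : ContDiffOn ℝ 2 (fun x : Vec a₂ × Vec a₂ => D₁ x.1 x.2) (U₂ ×ˢ U₂))
    (hD₂ : ContDiffOn ℝ 2 (fun x : Vec a₁ × Vec a₁ => D₂ x.1 x.2) (U₁ ×ˢ U₁))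
    -- (a) joint Hessians of `D₂` and `D₁` are positive semidefinite:
    (hjoint₂ : ∀ x ∈ U₁ ×ˢ U₁, ∀ w : Vec a₁ × Vec a₁,
      0 ≤ fderiv ℝ (fun y => fderiv ℝ (fun t : Vec a₁ × Vec a₁ => D₂ t.1 t.2) y w) x w)
    (hjoint₁ : ∀ x ∈ U₂ ×ˢ U₂, ∀ w : Vec a₂ × Vec a₂,
      0 ≤ fderiv ℝ (fun y => fderiv ℝ (fun t : Vec a₂ × Vec a₂ => D₁ t.1 t.2) y w) x w)
    -- (b) `ε₁∇²ν₁(π) − ½∇²_{ππ}D₂(p, π) ⪰ αI` and `ε₂∇²ν₂(π) − ½∇²_{ππ}D₁(p, π) ⪰ αI`: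
    (hb₁ : ∀ p ∈ U₁, ∀ π ∈ U₁, ∀ w : Vec a₁,
      α * ‖w‖ ^ 2
        ≤ ε₁ * fderiv ℝ (fun y => fderiv ℝ ν₁ y w) π w
            - (1 / 2) * fderiv ℝ (fun y => fderiv ℝ (fun t => D₂ p t) y w) π w)
    (hb₂ : ∀ p ∈ U₂, ∀ π ∈ U₂, ∀ w : Vec a₂,
      α * ‖w‖ ^ 2
        ≤ ε₂ * fderiv ℝ (fun y => fderiv ℝ ν₂ y w) π w
            - (1 / 2) * fderiv ℝ (fun y => fderiv ℝ (fun t => D₁ p t) y w) π w)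
    -- (c) `½∇²_{pp}D₂(p, π) ⪰ αI` and `½∇²_{pp}D₁(p, π) ⪰ αI`:
    (hc₁ : ∀ p ∈ U₁, ∀ π ∈ U₁, ∀ w : Vec a₁,
      α * ‖w‖ ^ 2 ≤ (1 / 2) * fderiv ℝ (fun y => fderiv ℝ (fun t => D₂ t π) y w) p w)
    (hc₂ : ∀ p ∈ U₂, ∀ π ∈ U₂, ∀ w : Vec a₂,
      α * ‖w‖ ^ 2 ≤ (1 / 2) * fderiv ℝ (fun y => fderiv ℝ (fun t => D₁ t π) y w) p w) :
    ∀ (R₁ : Matrix (Fin a₁) (Fin a₂) ℝ) (R₂ : Matrix (Fin a₂) (Fin a₁) ℝ),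
      StronglyMonotoneOnZ α ε₁ ε₂ ν₁ ν₂ D₁ D₂ R₁ R₂ := by
  intro R₁ R₂ z z' hz hz'
  have hopen₁ : IsOpen (U₁ ×ˢ U₁) := hU₁open.prod hU₁open
  have hopen₂ : IsOpen (U₂ ×ˢ U₂) := hU₂open.prod hU₂open
  obtain ⟨hz1, hz2, hz3, hz4⟩ := hz
  obtain ⟨hz1', hz2', hz3', hz4'⟩ := hz'
  have hπ₁ : z.1 ∈ U₁ := hU₁sub hz1
  have hπ₁' : z'.1 ∈ U₁ := hU₁sub hz1'
  have hπ₂ : z.2.1 ∈ U₂ := hU₂sub hz2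
  have hπ₂' : z'.2.1 ∈ U₂ := hU₂sub hz2'
  have hp₁ : z.2.2.1 ∈ U₂ := hU₂sub hz3
  have hp₁' : z'.2.2.1 ∈ U₂ := hU₂sub hz3'
  have hp₂ : z.2.2.2 ∈ U₁ := hU₁sub hz4
  have hp₂' : z'.2.2.2 ∈ U₁ := hU₁sub hz4'
  have memPi1 : ∀ t ∈ Set.Icc (0:ℝ) 1, z'.1 + t • (z.1 - z'.1) ∈ U₁ := fun t ht =>
    hU₁conv.add_smul_sub_mem hπ₁' hπ₁ ht
  have memPi2 : ∀ t ∈ Set.Icc (0:ℝ) 1, z'.2.1 + t • (z.2.1 - z'.2.1) ∈ U₂ := fun t ht =>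
    hU₂conv.add_smul_sub_mem hπ₂' hπ₂ ht
  have memP₁ : ∀ t ∈ Set.Icc (0:ℝ) 1, z'.2.2.1 + t • (z.2.2.1 - z'.2.2.1) ∈ U₂ := fun t ht =>
    hU₂conv.add_smul_sub_mem hp₁' hp₁ ht
  have memP₂ : ∀ t ∈ Set.Icc (0:ℝ) 1, z'.2.2.2 + t • (z.2.2.2 - z'.2.2.2) ∈ U₁ := fun t ht =>
    hU₁conv.add_smul_sub_mem hp₂' hp₂ ht
  -- derivative of the line function
  have hder : ∀ t ∈ Set.Icc (0:ℝ) 1,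
      HasDerivAt (fun s : ℝ =>
        ε₁ * fderiv ℝ ν₁ (z'.1 + s • (z.1 - z'.1)) (z.1 - z'.1)
        + ε₂ * fderiv ℝ ν₂ (z'.2.1 + s • (z.2.1 - z'.2.1)) (z.2.1 - z'.2.1)
        + fderiv ℝ (fun x : Vec a₂ × Vec a₂ => D₁ x.1 x.2) ((z'.2.2.1, z'.2.1) + s • ((z.2.2.1 - z'.2.2.1), (z.2.1 - z'.2.1))) ((z.2.2.1 - z'.2.2.1), (0 : Vec a₂))
        + fderiv ℝ (fun x : Vec a₁ × Vec a₁ => D₂ x.1 x.2) ((z'.2.2.2, z'.1) + s • ((z.2.2.2 - z'.2.2.2), (z.1 - z'.1))) ((z.2.2.2 - z'.2.2.2), (0 : Vec a₁)))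
      ((fun s : ℝ =>
        ε₁ * fderiv ℝ (fderiv ℝ ν₁) (z'.1 + s • (z.1 - z'.1)) (z.1 - z'.1) (z.1 - z'.1)
        + ε₂ * fderiv ℝ (fderiv ℝ ν₂) (z'.2.1 + s • (z.2.1 - z'.2.1)) (z.2.1 - z'.2.1) (z.2.1 - z'.2.1)
        + fderiv ℝ (fderiv ℝ (fun x : Vec a₂ × Vec a₂ => D₁ x.1 x.2)) ((z'.2.2.1, z'.2.1) + s • ((z.2.2.1 - z'.2.2.1), (z.2.1 - z'.2.1))) ((z.2.2.1 - z'.2.2.1), (z.2.1 - z'.2.1)) ((z.2.2.1 - z'.2.2.1), (0 : Vec a₂))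
        + fderiv ℝ (fderiv ℝ (fun x : Vec a₁ × Vec a₁ => D₂ x.1 x.2)) ((z'.2.2.2, z'.1) + s • ((z.2.2.2 - z'.2.2.2), (z.1 - z'.1))) ((z.2.2.2 - z'.2.2.2), (z.1 - z'.1)) ((z.2.2.2 - z'.2.2.2), (0 : Vec a₁))) t) t := by
    intro t ht
    have h1 := (hasDerivAt_line_fderiv (f := ν₁) z'.1 (z.1 - z'.1) (z.1 - z'.1) t
      (hν₁.contDiffAt (hU₁open.mem_nhds (memPi1 t ht)))).const_mul ε₁
    have h2 := (hasDerivAt_line_fderiv (f := ν₂) z'.2.1 (z.2.1 - z'.2.1) (z.2.1 - z'.2.1) t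
      (hν₂.contDiffAt (hU₂open.mem_nhds (memPi2 t ht)))).const_mul ε₂
    have hq₁ : ((z'.2.2.1, z'.2.1) + t • ((z.2.2.1 - z'.2.2.1), (z.2.1 - z'.2.1)) : Vec a₂ × Vec a₂) ∈ U₂ ×ˢ U₂ :=
      ⟨memP₁ t ht, memPi2 t ht⟩
    have hq₂ : ((z'.2.2.2, z'.1) + t • ((z.2.2.2 - z'.2.2.2), (z.1 - z'.1)) : Vec a₁ × Vec a₁) ∈ U₁ ×ˢ U₁ :=
      ⟨memP₂ t ht, memPi1 t ht⟩
    have h3 := hasDerivAt_line_fderiv (f := (fun x : Vec a₂ × Vec a₂ => D₁ x.1 x.2)) (z'.2.2.1, z'.2.1)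
      ((z.2.2.1 - z'.2.2.1), (z.2.1 - z'.2.1)) ((z.2.2.1 - z'.2.2.1), (0 : Vec a₂)) t (hD₁.contDiffAt (hopen₂.mem_nhds hq₁))
    have h4 := hasDerivAt_line_fderiv (f := (fun x : Vec a₁ × Vec a₁ => D₂ x.1 x.2)) (z'.2.2.2, z'.1)
      ((z.2.2.2 - z'.2.2.2), (z.1 - z'.1)) ((z.2.2.2 - z'.2.2.2), (0 : Vec a₁)) t (hD₂.contDiffAt (hopen₁.mem_nhds hq₂))
    exact ((h1.add h2).add h3).add h4
  -- lower bound for the derivative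
  have hbound : ∀ t ∈ Set.Icc (0:ℝ) 1,
      α * jnormSq (z - z') ≤ (fun s : ℝ =>
        ε₁ * fderiv ℝ (fderiv ℝ ν₁) (z'.1 + s • (z.1 - z'.1)) (z.1 - z'.1) (z.1 - z'.1)
        + ε₂ * fderiv ℝ (fderiv ℝ ν₂) (z'.2.1 + s • (z.2.1 - z'.2.1)) (z.2.1 - z'.2.1) (z.2.1 - z'.2.1)
        + fderiv ℝ (fderiv ℝ (fun x : Vec a₂ × Vec a₂ => D₁ x.1 x.2)) ((z'.2.2.1, z'.2.1) + s • ((z.2.2.1 - z'.2.2.1), (z.2.1 - z'.2.1))) ((z.2.2.1 - z'.2.2.1), (z.2.1 - z'.2.1)) ((z.2.2.1 - z'.2.2.1), (0 : Vec a₂))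
        + fderiv ℝ (fderiv ℝ (fun x : Vec a₁ × Vec a₁ => D₂ x.1 x.2)) ((z'.2.2.2, z'.1) + s • ((z.2.2.2 - z'.2.2.2), (z.1 - z'.1))) ((z.2.2.2 - z'.2.2.2), (z.1 - z'.1)) ((z.2.2.2 - z'.2.2.2), (0 : Vec a₁))) t := by
    intro t ht
    simp only []
    have hPi1 : z'.1 + t • (z.1 - z'.1) ∈ U₁ := memPi1 t ht
    have hPi2 : z'.2.1 + t • (z.2.1 - z'.2.1) ∈ U₂ := memPi2 t ht
    have hP₁ : z'.2.2.1 + t • (z.2.2.1 - z'.2.2.1) ∈ U₂ := memP₁ t ht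
    have hP₂ : z'.2.2.2 + t • (z.2.2.2 - z'.2.2.2) ∈ U₁ := memP₂ t ht
    have eqq₁ : ((z'.2.2.1, z'.2.1) + t • ((z.2.2.1 - z'.2.2.1), (z.2.1 - z'.2.1)) : Vec a₂ × Vec a₂)
        = ((z'.2.2.1 + t • (z.2.2.1 - z'.2.2.1)), (z'.2.1 + t • (z.2.1 - z'.2.1))) := rfl
    have eqq₂ : ((z'.2.2.2, z'.1) + t • ((z.2.2.2 - z'.2.2.2), (z.1 - z'.1)) : Vec a₁ × Vec a₁)
        = ((z'.2.2.2 + t • (z.2.2.2 - z'.2.2.2)), (z'.1 + t • (z.1 - z'.1))) := rfl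
    rw [eqq₁, eqq₂]
    have hq₁ : (((z'.2.2.1 + t • (z.2.2.1 - z'.2.2.1)), (z'.2.1 + t • (z.2.1 - z'.2.1))) : Vec a₂ × Vec a₂) ∈ U₂ ×ˢ U₂ := ⟨hP₁, hPi2⟩
    have hq₂ : (((z'.2.2.2 + t • (z.2.2.2 - z'.2.2.2)), (z'.1 + t • (z.1 - z'.1))) : Vec a₁ × Vec a₁) ∈ U₁ ×ˢ U₁ := ⟨hP₂, hPi1⟩
    have hf₁at : ContDiffAt ℝ 2 (fun x : Vec a₂ × Vec a₂ => D₁ x.1 x.2) ((z'.2.2.1 + t • (z.2.2.1 - z'.2.2.1)), (z'.2.1 + t • (z.2.1 - z'.2.1))) := hD₁.contDiffAt (hopen₂.mem_nhds hq₁)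
    have hf₂at : ContDiffAt ℝ 2 (fun x : Vec a₁ × Vec a₁ => D₂ x.1 x.2) ((z'.2.2.2 + t • (z.2.2.2 - z'.2.2.2)), (z'.1 + t • (z.1 - z'.1))) := hD₂.contDiffAt (hopen₁.mem_nhds hq₂)
    have hν₁at : ContDiffAt ℝ 2 ν₁ (z'.1 + t • (z.1 - z'.1)) := hν₁.contDiffAt (hU₁open.mem_nhds hPi1)
    have hν₂at : ContDiffAt ℝ 2 ν₂ (z'.2.1 + t • (z.2.1 - z'.2.1)) := hν₂.contDiffAt (hU₂open.mem_nhds hPi2)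
    -- block for ν₂ / D₁
    have b2 : α * ‖(z.2.1 - z'.2.1)‖ ^ 2
        ≤ ε₂ * fderiv ℝ (fderiv ℝ ν₂) (z'.2.1 + t • (z.2.1 - z'.2.1)) (z.2.1 - z'.2.1) (z.2.1 - z'.2.1)
          - (1 / 2) * fderiv ℝ (fderiv ℝ (fun x : Vec a₂ × Vec a₂ => D₁ x.1 x.2)) (z'.2.2.1 + t • (z.2.2.1 - z'.2.2.1), z'.2.1 + t • (z.2.1 - z'.2.1)) ((0 : Vec a₂), (z.2.1 - z'.2.1)) ((0 : Vec a₂), (z.2.1 - z'.2.1)) := by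
      have h := hb₂ _ hP₁ _ hPi2 (z.2.1 - z'.2.1)
      rw [show fderiv ℝ (fun y => fderiv ℝ ν₂ y (z.2.1 - z'.2.1)) (z'.2.1 + t • (z.2.1 - z'.2.1)) (z.2.1 - z'.2.1)
            = fderiv ℝ (fderiv ℝ ν₂) (z'.2.1 + t • (z.2.1 - z'.2.1)) (z.2.1 - z'.2.1) (z.2.1 - z'.2.1) from snd_deriv_eq hν₂at _ _,
          show fderiv ℝ (fun y => fderiv ℝ (fun q => D₁ (z'.2.2.1 + t • (z.2.2.1 - z'.2.2.1)) q) y (z.2.1 - z'.2.1)) (z'.2.1 + t • (z.2.1 - z'.2.1)) (z.2.1 - z'.2.1)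
            = fderiv ℝ (fderiv ℝ (fun x : Vec a₂ × Vec a₂ => D₁ x.1 x.2)) (z'.2.2.1 + t • (z.2.2.1 - z'.2.2.1), z'.2.1 + t • (z.2.1 - z'.2.1)) ((0 : Vec a₂), (z.2.1 - z'.2.1)) ((0 : Vec a₂), (z.2.1 - z'.2.1))
            from snd_slice_snd_deriv hopen₂ hD₁ hq₁ (z.2.1 - z'.2.1) (z.2.1 - z'.2.1)] at h
      exact h
    have c2 : α * ‖(z.2.2.1 - z'.2.2.1)‖ ^ 2
        ≤ (1 / 2) * fderiv ℝ (fderiv ℝ (fun x : Vec a₂ × Vec a₂ => D₁ x.1 x.2)) (z'.2.2.1 + t • (z.2.2.1 - z'.2.2.1), z'.2.1 + t • (z.2.1 - z'.2.1)) ((z.2.2.1 - z'.2.2.1), (0 : Vec a₂)) ((z.2.2.1 - z'.2.2.1), (0 : Vec a₂)) := by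
      have h := hc₂ _ hP₁ _ hPi2 (z.2.2.1 - z'.2.2.1)
      rw [show fderiv ℝ (fun y => fderiv ℝ (fun q => D₁ q (z'.2.1 + t • (z.2.1 - z'.2.1))) y (z.2.2.1 - z'.2.2.1)) (z'.2.2.1 + t • (z.2.2.1 - z'.2.2.1)) (z.2.2.1 - z'.2.2.1)
            = fderiv ℝ (fderiv ℝ (fun x : Vec a₂ × Vec a₂ => D₁ x.1 x.2)) (z'.2.2.1 + t • (z.2.2.1 - z'.2.2.1), z'.2.1 + t • (z.2.1 - z'.2.1)) ((z.2.2.1 - z'.2.2.1), (0 : Vec a₂)) ((z.2.2.1 - z'.2.2.1), (0 : Vec a₂))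
            from fst_slice_snd_deriv hopen₂ hD₁ hq₁ (z.2.2.1 - z'.2.2.1) (z.2.2.1 - z'.2.2.1)] at h
      exact h
    have psd₁ : ∀ w : Vec a₂ × Vec a₂, 0 ≤ fderiv ℝ (fderiv ℝ (fun x : Vec a₂ × Vec a₂ => D₁ x.1 x.2)) (z'.2.2.1 + t • (z.2.2.1 - z'.2.2.1), z'.2.1 + t • (z.2.1 - z'.2.1)) w w := by
      intro w
      have h := hjoint₁ _ hq₁ w
      rwa [snd_deriv_eq hf₁at w w] at h
    have cross₁ := cross_bound hf₁at psd₁ (z.2.2.1 - z'.2.2.1) (z.2.1 - z'.2.1)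
    have expand₁ : fderiv ℝ (fderiv ℝ (fun x : Vec a₂ × Vec a₂ => D₁ x.1 x.2)) (z'.2.2.1 + t • (z.2.2.1 - z'.2.2.1), z'.2.1 + t • (z.2.1 - z'.2.1)) ((z.2.2.1 - z'.2.2.1), (z.2.1 - z'.2.1)) ((z.2.2.1 - z'.2.2.1), (0 : Vec a₂))
        = fderiv ℝ (fderiv ℝ (fun x : Vec a₂ × Vec a₂ => D₁ x.1 x.2)) (z'.2.2.1 + t • (z.2.2.1 - z'.2.2.1), z'.2.1 + t • (z.2.1 - z'.2.1)) ((z.2.2.1 - z'.2.2.1), (0 : Vec a₂)) ((z.2.2.1 - z'.2.2.1), (0 : Vec a₂))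
          + fderiv ℝ (fderiv ℝ (fun x : Vec a₂ × Vec a₂ => D₁ x.1 x.2)) (z'.2.2.1 + t • (z.2.2.1 - z'.2.2.1), z'.2.1 + t • (z.2.1 - z'.2.1)) ((0 : Vec a₂), (z.2.1 - z'.2.1)) ((z.2.2.1 - z'.2.2.1), (0 : Vec a₂)) := by
      have e : (((z.2.2.1 - z'.2.2.1), (z.2.1 - z'.2.1)) : Vec a₂ × Vec a₂) = ((z.2.2.1 - z'.2.2.1), (0 : Vec a₂)) + ((0 : Vec a₂), (z.2.1 - z'.2.1)) := by
        simp [Prod.ext_iff]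
      rw [e, map_add, ContinuousLinearMap.add_apply]
    -- block for ν₁ / D₂
    have b1 : α * ‖(z.1 - z'.1)‖ ^ 2
        ≤ ε₁ * fderiv ℝ (fderiv ℝ ν₁) (z'.1 + t • (z.1 - z'.1)) (z.1 - z'.1) (z.1 - z'.1)
          - (1 / 2) * fderiv ℝ (fderiv ℝ (fun x : Vec a₁ × Vec a₁ => D₂ x.1 x.2)) (z'.2.2.2 + t • (z.2.2.2 - z'.2.2.2), z'.1 + t • (z.1 - z'.1)) ((0 : Vec a₁), (z.1 - z'.1)) ((0 : Vec a₁), (z.1 - z'.1)) := by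
      have h := hb₁ _ hP₂ _ hPi1 (z.1 - z'.1)
      rw [show fderiv ℝ (fun y => fderiv ℝ ν₁ y (z.1 - z'.1)) (z'.1 + t • (z.1 - z'.1)) (z.1 - z'.1)
            = fderiv ℝ (fderiv ℝ ν₁) (z'.1 + t • (z.1 - z'.1)) (z.1 - z'.1) (z.1 - z'.1) from snd_deriv_eq hν₁at _ _,
          show fderiv ℝ (fun y => fderiv ℝ (fun q => D₂ (z'.2.2.2 + t • (z.2.2.2 - z'.2.2.2)) q) y (z.1 - z'.1)) (z'.1 + t • (z.1 - z'.1)) (z.1 - z'.1)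
            = fderiv ℝ (fderiv ℝ (fun x : Vec a₁ × Vec a₁ => D₂ x.1 x.2)) (z'.2.2.2 + t • (z.2.2.2 - z'.2.2.2), z'.1 + t • (z.1 - z'.1)) ((0 : Vec a₁), (z.1 - z'.1)) ((0 : Vec a₁), (z.1 - z'.1))
            from snd_slice_snd_deriv hopen₁ hD₂ hq₂ (z.1 - z'.1) (z.1 - z'.1)] at h
      exact h
    have c1 : α * ‖(z.2.2.2 - z'.2.2.2)‖ ^ 2
        ≤ (1 / 2) * fderiv ℝ (fderiv ℝ (fun x : Vec a₁ × Vec a₁ => D₂ x.1 x.2)) (z'.2.2.2 + t • (z.2.2.2 - z'.2.2.2), z'.1 + t • (z.1 - z'.1)) ((z.2.2.2 - z'.2.2.2), (0 : Vec a₁)) ((z.2.2.2 - z'.2.2.2), (0 : Vec a₁)) := by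
      have h := hc₁ _ hP₂ _ hPi1 (z.2.2.2 - z'.2.2.2)
      rw [show fderiv ℝ (fun y => fderiv ℝ (fun q => D₂ q (z'.1 + t • (z.1 - z'.1))) y (z.2.2.2 - z'.2.2.2)) (z'.2.2.2 + t • (z.2.2.2 - z'.2.2.2)) (z.2.2.2 - z'.2.2.2)
            = fderiv ℝ (fderiv ℝ (fun x : Vec a₁ × Vec a₁ => D₂ x.1 x.2)) (z'.2.2.2 + t • (z.2.2.2 - z'.2.2.2), z'.1 + t • (z.1 - z'.1)) ((z.2.2.2 - z'.2.2.2), (0 : Vec a₁)) ((z.2.2.2 - z'.2.2.2), (0 : Vec a₁))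
            from fst_slice_snd_deriv hopen₁ hD₂ hq₂ (z.2.2.2 - z'.2.2.2) (z.2.2.2 - z'.2.2.2)] at h
      exact h
    have psd₂ : ∀ w : Vec a₁ × Vec a₁, 0 ≤ fderiv ℝ (fderiv ℝ (fun x : Vec a₁ × Vec a₁ => D₂ x.1 x.2)) (z'.2.2.2 + t • (z.2.2.2 - z'.2.2.2), z'.1 + t • (z.1 - z'.1)) w w := by
      intro w
      have h := hjoint₂ _ hq₂ w
      rwa [snd_deriv_eq hf₂at w w] at h
    have cross₂ := cross_bound hf₂at psd₂ (z.2.2.2 - z'.2.2.2) (z.1 - z'.1)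
    have expand₂ : fderiv ℝ (fderiv ℝ (fun x : Vec a₁ × Vec a₁ => D₂ x.1 x.2)) (z'.2.2.2 + t • (z.2.2.2 - z'.2.2.2), z'.1 + t • (z.1 - z'.1)) ((z.2.2.2 - z'.2.2.2), (z.1 - z'.1)) ((z.2.2.2 - z'.2.2.2), (0 : Vec a₁))
        = fderiv ℝ (fderiv ℝ (fun x : Vec a₁ × Vec a₁ => D₂ x.1 x.2)) (z'.2.2.2 + t • (z.2.2.2 - z'.2.2.2), z'.1 + t • (z.1 - z'.1)) ((z.2.2.2 - z'.2.2.2), (0 : Vec a₁)) ((z.2.2.2 - z'.2.2.2), (0 : Vec a₁))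
          + fderiv ℝ (fderiv ℝ (fun x : Vec a₁ × Vec a₁ => D₂ x.1 x.2)) (z'.2.2.2 + t • (z.2.2.2 - z'.2.2.2), z'.1 + t • (z.1 - z'.1)) ((0 : Vec a₁), (z.1 - z'.1)) ((z.2.2.2 - z'.2.2.2), (0 : Vec a₁)) := by
      have e : (((z.2.2.2 - z'.2.2.2), (z.1 - z'.1)) : Vec a₁ × Vec a₁) = ((z.2.2.2 - z'.2.2.2), (0 : Vec a₁)) + ((0 : Vec a₁), (z.1 - z'.1)) := by
        simp [Prod.ext_iff]
      rw [e, map_add, ContinuousLinearMap.add_apply]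
    have hnorm : jnormSq (z - z') = ‖(z.1 - z'.1)‖ ^ 2 + ‖(z.2.1 - z'.2.1)‖ ^ 2 + ‖(z.2.2.1 - z'.2.2.1)‖ ^ 2 + ‖(z.2.2.2 - z'.2.2.2)‖ ^ 2 := by
      simp [jnormSq, Prod.fst_sub, Prod.snd_sub]
    rw [expand₁, expand₂, hnorm]
    linarith [b1, b2, c1, c2, cross₁, cross₂]
  have hmvt := mvt_ge hder hbound
  -- evaluate the endpoints
  simp only [one_smul, zero_smul, add_zero, Prod.mk_add_mk, add_sub_cancel] at hmvt
  -- differentiability for gradient-slice identification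
  have hd₁z : DifferentiableAt ℝ (fun x : Vec a₂ × Vec a₂ => D₁ x.1 x.2) (z.2.2.1, z.2.1) :=
    (hD₁.contDiffAt (hopen₂.mem_nhds ⟨hp₁, hπ₂⟩)).differentiableAt two_ne_zero
  have hd₁z' : DifferentiableAt ℝ (fun x : Vec a₂ × Vec a₂ => D₁ x.1 x.2) (z'.2.2.1, z'.2.1) :=
    (hD₁.contDiffAt (hopen₂.mem_nhds ⟨hp₁', hπ₂'⟩)).differentiableAt two_ne_zero
  have hd₂z : DifferentiableAt ℝ (fun x : Vec a₁ × Vec a₁ => D₂ x.1 x.2) (z.2.2.2, z.1) :=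
    (hD₂.contDiffAt (hopen₁.mem_nhds ⟨hp₂, hπ₁⟩)).differentiableAt two_ne_zero
  have hd₂z' : DifferentiableAt ℝ (fun x : Vec a₁ × Vec a₁ => D₂ x.1 x.2) (z'.2.2.2, z'.1) :=
    (hD₂.contDiffAt (hopen₁.mem_nhds ⟨hp₂', hπ₁'⟩)).differentiableAt two_ne_zero
  have s1 : fderiv ℝ (fun p => D₁ p z.2.1) z.2.2.1 (z.2.2.1 - z'.2.2.1)
      = fderiv ℝ (fun x : Vec a₂ × Vec a₂ => D₁ x.1 x.2) (z.2.2.1, z.2.1) ((z.2.2.1 - z'.2.2.1), (0 : Vec a₂)) := fst_slice_fderiv hd₁z (z.2.2.1 - z'.2.2.1)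
  have s1' : fderiv ℝ (fun p => D₁ p z'.2.1) z'.2.2.1 (z.2.2.1 - z'.2.2.1)
      = fderiv ℝ (fun x : Vec a₂ × Vec a₂ => D₁ x.1 x.2) (z'.2.2.1, z'.2.1) ((z.2.2.1 - z'.2.2.1), (0 : Vec a₂)) := fst_slice_fderiv hd₁z' (z.2.2.1 - z'.2.2.1)
  have s2 : fderiv ℝ (fun p => D₂ p z.1) z.2.2.2 (z.2.2.2 - z'.2.2.2)
      = fderiv ℝ (fun x : Vec a₁ × Vec a₁ => D₂ x.1 x.2) (z.2.2.2, z.1) ((z.2.2.2 - z'.2.2.2), (0 : Vec a₁)) := fst_slice_fderiv hd₂z (z.2.2.2 - z'.2.2.2)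
  have s2' : fderiv ℝ (fun p => D₂ p z'.1) z'.2.2.2 (z.2.2.2 - z'.2.2.2)
      = fderiv ℝ (fun x : Vec a₁ × Vec a₁ => D₂ x.1 x.2) (z'.2.2.2, z'.1) ((z.2.2.2 - z'.2.2.2), (0 : Vec a₁)) := fst_slice_fderiv hd₂z' (z.2.2.2 - z'.2.2.2)
  -- expand the four inner products
  have t1 : (inner ℝ (z.1 - z'.1) (-(mv R₁ z.2.2.1) + ε₁ • gradient ν₁ z.1
        - (-(mv R₁ z'.2.2.1) + ε₁ • gradient ν₁ z'.1)) : ℝ)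
      = -(inner ℝ (z.1 - z'.1) (mv R₁ (z.2.2.1 - z'.2.2.1)) : ℝ)
        + (ε₁ * fderiv ℝ ν₁ z.1 (z.1 - z'.1) - ε₁ * fderiv ℝ ν₁ z'.1 (z.1 - z'.1)) := by
    simp only [inner_sub_right, inner_add_right, inner_neg_right, real_inner_smul_right,
      inner_grad', ← mv_sub']
    ring
  have t2 : (inner ℝ (z.2.1 - z'.2.1) (-(mv R₂ z.2.2.2) + ε₂ • gradient ν₂ z.2.1
        - (-(mv R₂ z'.2.2.2) + ε₂ • gradient ν₂ z'.2.1)) : ℝ)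
      = -(inner ℝ (z.2.1 - z'.2.1) (mv R₂ (z.2.2.2 - z'.2.2.2)) : ℝ)
        + (ε₂ * fderiv ℝ ν₂ z.2.1 (z.2.1 - z'.2.1) - ε₂ * fderiv ℝ ν₂ z'.2.1 (z.2.1 - z'.2.1)) := by
    simp only [inner_sub_right, inner_add_right, inner_neg_right, real_inner_smul_right,
      inner_grad', ← mv_sub']
    ring
  have t3 : (inner ℝ (z.2.2.1 - z'.2.2.1) (mv R₁.transpose z.1 + gradient (fun p => D₁ p z.2.1) z.2.2.1
        - (mv R₁.transpose z'.1 + gradient (fun p => D₁ p z'.2.1) z'.2.2.1)) : ℝ)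
      = (inner ℝ (z.2.2.1 - z'.2.2.1) (mv R₁.transpose (z.1 - z'.1)) : ℝ)
        + (fderiv ℝ (fun x : Vec a₂ × Vec a₂ => D₁ x.1 x.2) (z.2.2.1, z.2.1) ((z.2.2.1 - z'.2.2.1), (0 : Vec a₂))
           - fderiv ℝ (fun x : Vec a₂ × Vec a₂ => D₁ x.1 x.2) (z'.2.2.1, z'.2.1) ((z.2.2.1 - z'.2.2.1), (0 : Vec a₂))) := by
    simp only [inner_sub_right, inner_add_right, inner_grad', ← mv_sub', s1, s1']
    ring
  have t4 : (inner ℝ (z.2.2.2 - z'.2.2.2) (mv R₂.transpose z.2.1 + gradient (fun p => D₂ p z.1) z.2.2.2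
        - (mv R₂.transpose z'.2.1 + gradient (fun p => D₂ p z'.1) z'.2.2.2)) : ℝ)
      = (inner ℝ (z.2.2.2 - z'.2.2.2) (mv R₂.transpose (z.2.1 - z'.2.1)) : ℝ)
        + (fderiv ℝ (fun x : Vec a₁ × Vec a₁ => D₂ x.1 x.2) (z.2.2.2, z.1) ((z.2.2.2 - z'.2.2.2), (0 : Vec a₁))
           - fderiv ℝ (fun x : Vec a₁ × Vec a₁ => D₂ x.1 x.2) (z'.2.2.2, z'.1) ((z.2.2.2 - z'.2.2.2), (0 : Vec a₁))) := by
    simp only [inner_sub_right, inner_add_right, inner_grad', ← mv_sub', s2, s2']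
    ring
  have cancel1 : (inner ℝ (z.1 - z'.1) (mv R₁ (z.2.2.1 - z'.2.2.1)) : ℝ)
      = (inner ℝ (z.2.2.1 - z'.2.2.1) (mv R₁.transpose (z.1 - z'.1)) : ℝ) := inner_mv_transpose R₁ (z.1 - z'.1) (z.2.2.1 - z'.2.2.1)
  have cancel2 : (inner ℝ (z.2.1 - z'.2.1) (mv R₂ (z.2.2.2 - z'.2.2.2)) : ℝ)
      = (inner ℝ (z.2.2.2 - z'.2.2.2) (mv R₂.transpose (z.2.1 - z'.2.1)) : ℝ) := inner_mv_transpose R₂ (z.2.1 - z'.2.1) (z.2.2.2 - z'.2.2.2)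
  simp only [jip, Fop, Prod.fst_sub, Prod.snd_sub]
  rw [t1, t2, t3, t4]
  linarith [hmvt, cancel1, cancel2]
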